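/- Let p be an odd prime. The submodule of Γ₂(p)-invariants of (M ⊕ M*) ⊗ ℤ/p²ℤ (i.e. of (ℤ/p²ℤ)⁴ with Γ₂(p) acting through entrywise reduction mod p², by v ↦ A·v on the first two coordinates and v ↦ (Aᵀ)⁻¹·v on the last two) is isomorphic to (ℤ/pℤ)⁴. -/

import Mathlib

open Matrix CongruenceSubgroup

variable (p : ℕ)

lemma pp_zero : (p : ZMod (p^2)) * (p : ZMod (p^2)) = 0 := by
  have h := ZMod.natCast_self (p^2)
  push_cast at h
  linear_combination h

lemma pmul_mod (n : ℕ) :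
    (p : ZMod (p^2)) * ((n % p : ℕ) : ZMod (p^2)) = (p : ZMod (p^2)) * (n : ZMod (p^2)) := by
  conv_rhs => rw [← Nat.mod_add_div n p]
  push_cast
  linear_combination (-((n / p : ℕ) : ZMod (p^2))) * pp_zero p

/-- the additive embedding `ZMod p → ZMod (p^2)`, `a ↦ p * a`. -/
def fp (a : ZMod p) : ZMod (p^2) := (p : ZMod (p^2)) * ((a.val : ℕ) : ZMod (p^2))

lemma fp_add [NeZero p] (a b : ZMod p) : fp p (a + b) = fp p a + fp p b := by
  unfold fp
  rw [ZMod.val_add, pmul_mod]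
  push_cast
  ring

lemma fp_eq_zero [Fact p.Prime] {a : ZMod p} (h : fp p a = 0) : a = 0 := by
  have hp := (Fact.out : p.Prime)
  haveI : NeZero (p^2) := ⟨pow_ne_zero _ hp.ne_zero⟩
  unfold fp at h
  rw [← Nat.cast_mul, ZMod.natCast_eq_zero_iff, pow_two,
    Nat.mul_dvd_mul_iff_left hp.pos] at h
  have hlt := ZMod.val_lt a
  have hv : a.val = 0 := by
    rcases Nat.eq_zero_or_pos a.val with h0 | h0
    · exact h0
    · exact absurd (Nat.le_of_dvd h0 h) (by omega)
  exact (ZMod.val_eq_zero a).mp hv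

lemma fp_surj_on [Fact p.Prime] {t : ZMod (p^2)} (w : ZMod (p^2))
    (h : t = (p : ZMod (p^2)) * w) : ∃ a : ZMod p, fp p a = t := by
  have hp := (Fact.out : p.Prime)
  haveI : NeZero (p^2) := ⟨pow_ne_zero _ hp.ne_zero⟩
  refine ⟨((w.val : ℕ) : ZMod p), ?_⟩
  unfold fp
  rw [ZMod.val_natCast, pmul_mod, h]
  congr 1
  simp [ZMod.natCast_val, ZMod.cast_id]

lemma exists_of_pmul_zero [Fact p.Prime] {t : ZMod (p^2)}
    (h : (p : ZMod (p^2)) * t = 0) : ∃ w, t = (p : ZMod (p^2)) * w := by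
  have hp := (Fact.out : p.Prime)
  haveI : NeZero (p^2) := ⟨pow_ne_zero _ hp.ne_zero⟩
  have ht : ((t.val : ℕ) : ZMod (p^2)) = t := by simp [ZMod.natCast_val, ZMod.cast_id]
  have h2 : ((p * t.val : ℕ) : ZMod (p^2)) = 0 := by push_cast; rw [ht]; exact h
  rw [ZMod.natCast_eq_zero_iff] at h2
  obtain ⟨v, hv⟩ : ∃ v : ℕ, t.val = v := ⟨t.val, rfl⟩
  rw [hv] at h2 ht
  rw [pow_two, Nat.mul_dvd_mul_iff_left hp.pos] at h2
  obtain ⟨m, hm⟩ := h2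
  have h3 : t = ((p * m : ℕ) : ZMod (p^2)) := by rw [← hm]; exact ht.symm
  push_cast at h3
  exact ⟨(m : ℕ), by linear_combination h3⟩

lemma int_cast_p_sq {n : ℤ} (h : (n : ZMod p) = 0) :
    ∃ c : ZMod (p^2), (n : ZMod (p^2)) = (p : ZMod (p^2)) * c := by
  obtain ⟨m, hm⟩ := (ZMod.intCast_zmod_eq_zero_iff_dvd n p).mp h
  exact ⟨(m : ZMod (p^2)), by rw [hm]; push_cast; ring⟩

lemma int_cast_p_sq_one {n : ℤ} (h : (n : ZMod p) = 1) :
    ∃ c : ZMod (p^2), (n : ZMod (p^2)) = 1 + (p : ZMod (p^2)) * c := by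
  have h' : ((n - 1 : ℤ) : ZMod p) = 0 := by push_cast; rw [h]; ring
  obtain ⟨c, hc⟩ := int_cast_p_sq p h'
  refine ⟨c, ?_⟩
  have : ((n - 1 : ℤ) : ZMod (p^2)) = (n : ZMod (p^2)) - 1 := by push_cast; ring
  rw [this] at hc
  linear_combination hc
/-- The monoid homomorphism from linear automorphisms to linear endomorphisms. -/
def linEquivToEnd {R M : Type*} [CommRing R] [AddCommGroup M] [Module R M] :
    (M ≃ₗ[R] M) →* (M →ₗ[R] M) where
  toFun e := e.toLinearMap
  map_one' := rfl
  map_mul' _ _ := rfl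

/-- `A ↦ (Aᵀ)⁻¹ = (A⁻¹)ᵀ` as an endomorphism of `SL(n,R)`. -/
def dualSL {n : Type*} [DecidableEq n] [Fintype n] {R : Type*} [CommRing R] :
    Matrix.SpecialLinearGroup n R →* Matrix.SpecialLinearGroup n R where
  toFun A := (A⁻¹).transpose
  map_one' := by
    apply Subtype.ext
    simp [Matrix.SpecialLinearGroup.transpose]
  map_mul' A B := by
    apply Subtype.ext
    simp [Matrix.SpecialLinearGroup.transpose, Matrix.transpose_mul, _root_.mul_inv_rev]
    rfl

/-- `M ⊗ ℤ/p²ℤ`: the representation of `Γ₂(p)` on `(ℤ/p²ℤ)²` given by entrywise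
reduction mod `p²` followed by matrix–vector multiplication `v ↦ A·v`. -/
noncomputable def repMmod (p : ℕ) : Representation (ZMod (p ^ 2)) (Gamma p) (Fin 2 → ZMod (p ^ 2)) :=
  (linEquivToEnd.comp Matrix.SpecialLinearGroup.toLin').comp
    ((Matrix.SpecialLinearGroup.map (Int.castRingHom (ZMod (p ^ 2)))).comp (Gamma p).subtype)

/-- `M* ⊗ ℤ/p²ℤ`: as above, with `A` acting by `v ↦ (Aᵀ)⁻¹·v`. -/
noncomputable def repMdualMod (p : ℕ) : Representation (ZMod (p ^ 2)) (Gamma p) (Fin 2 → ZMod (p ^ 2)) :=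
  ((linEquivToEnd.comp Matrix.SpecialLinearGroup.toLin').comp dualSL).comp
    ((Matrix.SpecialLinearGroup.map (Int.castRingHom (ZMod (p ^ 2)))).comp (Gamma p).subtype)

/-- `(M ⊕ M*) ⊗ ℤ/p²ℤ` as a representation of `Γ₂(p)`. -/
noncomputable def repSumMod (p : ℕ) :
    Representation (ZMod (p ^ 2)) (Gamma p)
      ((Fin 2 → ZMod (p ^ 2)) × (Fin 2 → ZMod (p ^ 2))) :=
  ((LinearMap.prodMapRingHom (ZMod (p ^ 2)) _ _).toMonoidHom).comp
    (MonoidHom.prod (repMmod p) (repMdualMod p))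

open scoped MatrixGroups

lemma repSumMod_apply (p : ℕ) (g : Gamma p) (x : (Fin 2 → ZMod (p^2)) × (Fin 2 → ZMod (p^2))) :
    repSumMod p g x =
      ((((g : SL(2,ℤ)) : Matrix (Fin 2) (Fin 2) ℤ).map (Int.cast : ℤ → ZMod (p^2))).mulVec x.1,
       Matrix.mulVec (Matrix.transpose (((Matrix.SpecialLinearGroup.map (Int.castRingHom (ZMod (p^2)))
          (g : SL(2,ℤ)))⁻¹ : SL(2, ZMod (p^2))) : Matrix (Fin 2) (Fin 2) (ZMod (p^2)))) x.2) := by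
  rfl

lemma mulVec_fixed {p : ℕ} {B : Matrix (Fin 2) (Fin 2) (ZMod (p^2))}
    (hB : ∀ i j, ∃ c, B i j = (1 : Matrix (Fin 2) (Fin 2) (ZMod (p^2))) i j + (p:ZMod (p^2)) * c)
    {v : Fin 2 → ZMod (p^2)} (hv : ∀ j, ∃ w, v j = (p:ZMod (p^2)) * w) :
    B.mulVec v = v := by
  funext i
  have key : B.mulVec v i = (1 : Matrix (Fin 2) (Fin 2) (ZMod (p^2))).mulVec v i := by
    simp only [Matrix.mulVec, dotProduct]
    refine Finset.sum_congr rfl fun j _ => ?_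
    obtain ⟨c, hc⟩ := hB i j
    obtain ⟨w, hw⟩ := hv j
    rw [hc, hw]
    linear_combination (c * w) * pp_zero p
  rw [key, Matrix.one_mulVec]

/-- entries of a matrix in `Γ(p)` reduced mod `p²` are `1 i j + p·c`. -/
lemma nearOne_red {p : ℕ} (g : Gamma p) (i j : Fin 2) :
    ∃ c : ZMod (p^2), (((g : SL(2,ℤ)) : Matrix (Fin 2) (Fin 2) ℤ).map (Int.cast : ℤ → ZMod (p^2))) i j
      = (1 : Matrix (Fin 2) (Fin 2) (ZMod (p^2))) i j + (p:ZMod (p^2)) * c := by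
  have hg := (Gamma_mem).mp g.2
  fin_cases i <;> fin_cases j <;>
    simp only [Fin.zero_eta, Fin.mk_one, Fin.isValue, Matrix.map_apply, Matrix.one_apply_eq,
      Matrix.one_apply_ne (by decide : (0:Fin 2) ≠ 1), Matrix.one_apply_ne (by decide : (1:Fin 2) ≠ 0)]
  · obtain ⟨c, hc⟩ := int_cast_p_sq_one p hg.1; exact ⟨c, by rw [hc]⟩
  · obtain ⟨c, hc⟩ := int_cast_p_sq p hg.2.1; exact ⟨c, by rw [hc]; simp [Matrix.one_apply]⟩
  · obtain ⟨c, hc⟩ := int_cast_p_sq p hg.2.2.1; exact ⟨c, by rw [hc]; simp [Matrix.one_apply]⟩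
  · obtain ⟨c, hc⟩ := int_cast_p_sq_one p hg.2.2.2; exact ⟨c, by rw [hc]⟩

def Emat (p : ℕ) : SL(2,ℤ) := ⟨!![1, (p:ℤ); 0, 1], by simp [Matrix.det_fin_two_of]⟩
def Fmat (p : ℕ) : SL(2,ℤ) := ⟨!![1, 0; (p:ℤ), 1], by simp [Matrix.det_fin_two_of]⟩

lemma Emat_mem (p : ℕ) : Emat p ∈ Gamma p := by
  rw [Gamma_mem]
  refine ⟨?_, ?_, ?_, ?_⟩ <;> simp [Emat]

lemma Fmat_mem (p : ℕ) : Fmat p ∈ Gamma p := by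
  rw [Gamma_mem]
  refine ⟨?_, ?_, ?_, ?_⟩ <;> simp [Fmat]

lemma mapE (p : ℕ) : ((Emat p : Matrix (Fin 2) (Fin 2) ℤ).map (Int.cast : ℤ → ZMod (p^2)))
    = !![1, (p:ZMod (p^2)); 0, 1] := by
  ext i j
  fin_cases i <;> fin_cases j <;> simp [Emat]

lemma mapF (p : ℕ) : ((Fmat p : Matrix (Fin 2) (Fin 2) ℤ).map (Int.cast : ℤ → ZMod (p^2)))
    = !![1, 0; (p:ZMod (p^2)), 1] := by
  ext i j
  fin_cases i <;> fin_cases j <;> simp [Fmat]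

lemma mapE_inv (p : ℕ) :
    (((Matrix.SpecialLinearGroup.map (Int.castRingHom (ZMod (p^2))) (Emat p))⁻¹ : SL(2, ZMod (p^2)))
      : Matrix (Fin 2) (Fin 2) (ZMod (p^2))) = !![1, -(p:ZMod (p^2)); 0, 1] := by
  rw [Matrix.SpecialLinearGroup.SL2_inv_expl]
  ext i j
  fin_cases i <;> fin_cases j <;> simp [Emat] <;> erw [Matrix.SpecialLinearGroup.map_apply_coe] <;> simp

lemma mapF_inv (p : ℕ) :
    (((Matrix.SpecialLinearGroup.map (Int.castRingHom (ZMod (p^2))) (Fmat p))⁻¹ : SL(2, ZMod (p^2)))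
      : Matrix (Fin 2) (Fin 2) (ZMod (p^2))) = !![1, 0; -(p:ZMod (p^2)), 1] := by
  rw [Matrix.SpecialLinearGroup.SL2_inv_expl]
  ext i j
  fin_cases i <;> fin_cases j <;> simp [Fmat] <;> erw [Matrix.SpecialLinearGroup.map_apply_coe] <;> simp

lemma mem_inv_iff (p : ℕ) [Fact p.Prime]
    (x : (Fin 2 → ZMod (p^2)) × (Fin 2 → ZMod (p^2))) :
    x ∈ (repSumMod p).invariants ↔
      ((∀ j, ∃ w, x.1 j = (p:ZMod (p^2)) * w) ∧ (∀ j, ∃ w, x.2 j = (p:ZMod (p^2)) * w)) := by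
  rw [Representation.mem_invariants]
  constructor
  · intro hx
    have hE := hx ⟨Emat p, Emat_mem p⟩
    have hF := hx ⟨Fmat p, Fmat_mem p⟩
    rw [repSumMod_apply] at hE hF
    have e1 := congrFun (congrArg Prod.fst hE) 0
    have f1 := congrFun (congrArg Prod.fst hF) 1
    have e2 := congrFun (congrArg Prod.snd hE) 1
    have f2 := congrFun (congrArg Prod.snd hF) 0
    simp only [mapE, mapF, mapE_inv, mapF_inv] at e1 f1 e2 f2
    simp [Matrix.mulVec, dotProduct, Fin.sum_univ_two, Matrix.transpose_apply] at e1 f1 e2 f2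
    have k11 : (p:ZMod (p^2)) * x.1 1 = 0 := by linear_combination e1
    have k10 : (p:ZMod (p^2)) * x.1 0 = 0 := by linear_combination f1
    have k20 : (p:ZMod (p^2)) * x.2 0 = 0 := by linear_combination e2
    have k21 : (p:ZMod (p^2)) * x.2 1 = 0 := by linear_combination f2
    constructor
    · intro j
      fin_cases j
      · exact exists_of_pmul_zero p k10
      · exact exists_of_pmul_zero p k11
    · intro j
      fin_cases j
      · exact exists_of_pmul_zero p k20
      · exact exists_of_pmul_zero p k21
  · rintro ⟨h1, h2⟩ g
    rw [repSumMod_apply]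
    have hM : ((Matrix.SpecialLinearGroup.map (Int.castRingHom (ZMod (p^2))) (↑g : SL(2,ℤ)))⁻¹)
        = Matrix.SpecialLinearGroup.map (Int.castRingHom (ZMod (p^2))) (↑(g⁻¹) : SL(2,ℤ)) := by
      rw [show ((g⁻¹ : Gamma p) : SL(2,ℤ)) = (↑g)⁻¹ from rfl, map_inv]
    refine Prod.ext ?_ ?_
    · exact mulVec_fixed (nearOne_red g) h1
    · show Matrix.mulVec _ x.2 = x.2
      rw [hM]
      refine mulVec_fixed ?_ h2
      intro i j
      obtain ⟨c, hc⟩ := nearOne_red (g⁻¹) j i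
      refine ⟨c, ?_⟩
      rw [Matrix.transpose_apply,
        show (1 : Matrix (Fin 2) (Fin 2) (ZMod (p^2))) i j = (1 : Matrix (Fin 2) (Fin 2) (ZMod (p^2))) j i
          from by simp [Matrix.one_apply, eq_comm]]
      exact hc

lemma fp_neg (p : ℕ) [NeZero p] (a : ZMod p) : fp p (-a) = - fp p a := by
  have h := fp_add p a (-a)
  simp only [add_neg_cancel] at h
  have h0 : fp p (0 : ZMod p) = 0 := by simp [fp]
  rw [h0] at h
  linear_combination -h

lemma fp_inj (p : ℕ) [Fact p.Prime] {a b : ZMod p} (h : fp p a = fp p b) : a = b := by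
  have : fp p (a - b) = 0 := by
    rw [sub_eq_add_neg, fp_add, fp_neg, h]; ring
  have := fp_eq_zero p this
  linear_combination this

/-- for an odd prime `p`, the submodule of `Γ₂(p)`-invariants of
`(M ⊕ M*) ⊗ ℤ/p²ℤ` is isomorphic to `(ℤ/pℤ)⁴`. -/
theorem stmt8 (p : ℕ) (hp : p.Prime) (hodd : Odd p) :
    Nonempty ((repSumMod p).invariants ≃+ (Fin 4 → ZMod p)) := by
  haveI : Fact p.Prime := ⟨hp⟩
  haveI : NeZero (p^2) := ⟨pow_ne_zero _ hp.ne_zero⟩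
  let ψ : (Fin 4 → ZMod p) →+ (repSumMod p).invariants :=
  { toFun := fun a => ⟨(![fp p (a 0), fp p (a 1)], ![fp p (a 2), fp p (a 3)]),
      (mem_inv_iff p _).mpr
        ⟨fun j => by fin_cases j <;> exact ⟨_, rfl⟩,
         fun j => by fin_cases j <;> exact ⟨_, rfl⟩⟩⟩
    map_zero' := by
      apply Subtype.ext
      refine Prod.ext ?_ ?_ <;> funext j <;> fin_cases j <;> simp [fp]
    map_add' := fun a b => by
      apply Subtype.ext
      refine Prod.ext ?_ ?_ <;> funext j <;> fin_cases j <;> simp [fp_add] }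
  have hinj : Function.Injective ψ := by
    intro a b h
    have h1 := congrFun (congrArg (Prod.fst ∘ Subtype.val) h)
    have h2 := congrFun (congrArg (Prod.snd ∘ Subtype.val) h)
    funext i
    fin_cases i
    · exact fp_inj p (by simpa [ψ] using h1 0)
    · exact fp_inj p (by simpa [ψ] using h1 1)
    · exact fp_inj p (by simpa [ψ] using h2 0)
    · exact fp_inj p (by simpa [ψ] using h2 1)
  have hsurj : Function.Surjective ψ := by
    rintro ⟨⟨y1, y2⟩, hy⟩
    obtain ⟨h1, h2⟩ := (mem_inv_iff p _).mp hy
    obtain ⟨w10, hw10⟩ := h1 0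
    obtain ⟨w11, hw11⟩ := h1 1
    obtain ⟨w20, hw20⟩ := h2 0
    obtain ⟨w21, hw21⟩ := h2 1
    obtain ⟨a0, ha0⟩ := fp_surj_on p w10 hw10
    obtain ⟨a1, ha1⟩ := fp_surj_on p w11 hw11
    obtain ⟨a2, ha2⟩ := fp_surj_on p w20 hw20
    obtain ⟨a3, ha3⟩ := fp_surj_on p w21 hw21
    refine ⟨![a0, a1, a2, a3], ?_⟩
    apply Subtype.ext
    show ((![fp p (![a0, a1, a2, a3] 0), fp p (![a0, a1, a2, a3] 1)],
      ![fp p (![a0, a1, a2, a3] 2), fp p (![a0, a1, a2, a3] 3)]) : (Fin 2 → ZMod (p ^ 2)) × (Fin 2 → ZMod (p ^ 2))) = (y1, y2)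
    refine Prod.ext (funext (Fin.forall_fin_two.mpr ⟨?_, ?_⟩))
      (funext (Fin.forall_fin_two.mpr ⟨?_, ?_⟩)) <;>
      simp [ha0, ha1, ha2, ha3]
  exact ⟨(AddEquiv.ofBijective ψ ⟨hinj, hsurj⟩).symm⟩
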